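/- For k < ω and n < k, the set F(ω^k)^r_n equals {β ⊏ ω^k : CB(β) = n, i(β) > r, and every β' with β ⊏ β' ⊏ ω^k has i(β') > r}, where i(γ) is the last coefficient of the Cantor normal form of γ. -/

import Mathlib

open Ordinal

universe u

/-- Cantor–Bendixson rank: the last exponent of the Cantor normal form (`CB 0 = 0`). -/
noncomputable def CB (o : Ordinal) : Ordinal :=
  ((Ordinal.CNF Ordinal.omega0 o).getLast?).elim 0 Prod.fst

/-- The last coefficient of the Cantor normal form. -/
noncomputable def lastCoeff (o : Ordinal) : Ordinal :=
  ((Ordinal.CNF Ordinal.omega0 o).getLast?).elim 0 Prod.snd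

/-- The position of `o` in its fan: the last coefficient of the Cantor normal form,
with the convention `i(n) = n + 1` for natural numbers `n` (virtually omitting `0`). -/
noncomputable def placeInFan (o : Ordinal) : Ordinal :=
  if o < Ordinal.omega0 then o + 1 else lastCoeff o

/-- The anti-tree order: `treeOrd β α` iff `α = β + ω ^ γ` for some `γ > CB β`. -/
def treeOrd (β α : Ordinal) : Prop :=
  ∃ γ : Ordinal, CB β < γ ∧ α = β + Ordinal.omega0 ^ γ

/-- The immediate `treeOrd`-successor of `β`. -/
noncomputable def treeSucc (β : Ordinal) : Ordinal :=
  β + Ordinal.omega0 ^ (CB β + 1)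

/-- The set of immediate `treeOrd`-predecessors of `α`. -/
def subfan (α : Ordinal) : Set Ordinal := {γ | treeSucc γ = α}

/-- The fan of `β`: the set of immediate predecessors of the immediate successor of `β`. -/
def fan (β : Ordinal) : Set Ordinal := subfan (treeSucc β)

open Classical in
/-- The order type of a set of ordinals: the unique `δ` with `S ≃o Set.Iio δ` (0 if none). -/
noncomputable def otp (S : Set Ordinal.{u}) : Ordinal.{u} :=
  if h : ∃ δ : Ordinal.{u}, Nonempty (S ≃o Set.Iio δ) then h.choose else 0

/-- The image of `α ∈ S` under the unique order-preserving bijection of `S` with `otp S`. -/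
noncomputable def ordIndex (S : Set Ordinal) (α : Ordinal) : Ordinal :=
  otp {x | x ∈ S ∧ x < α}

/-- `I` is closed in the ordinal `δ` (with its order topology). -/
def closedIn (I : Set Ordinal) (δ : Ordinal) : Prop :=
  IsClosed {x : Set.Iio δ | (x : Ordinal) ∈ I}

/-- `X` is closed in its supremum. -/
def ClosedInSup (X : Set Ordinal) : Prop := closedIn X (sSup X)

/-- `I` is a skeleton of the ordinal `δ`. -/
def IsSkelOrd (I : Set Ordinal) (δ : Ordinal) : Prop :=
  I ⊆ Set.Iio δ ∧ closedIn I δ ∧ otp I = δ ∧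
    ∀ α ∈ I, ∀ β ∈ I, (treeOrd α β ↔ treeOrd (ordIndex I α) (ordIndex I β))

/-- `I` is a skeleton of the set `J`. -/
def IsSkelSet (I J : Set Ordinal) : Prop :=
  I ⊆ J ∧ IsSkelOrd (ordIndex J '' I) (otp J)

/-- `I` is an `n`-skeleton of the set `J`. -/
def IsNSkelSet (n : ℕ) (I J : Set Ordinal) : Prop :=
  IsSkelSet I J ∧
    ∀ α ∈ J, (fan α ∩ I).Nonempty → placeInFan (ordIndex J α) ≤ (n : Ordinal) → α ∈ I

/-- A collection `(I i)_{i < γ}` of subsets of `δ` is fan preserving. -/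
def FanPreserving (γ : Ordinal) (I : Ordinal → Set Ordinal) (δ : Ordinal) : Prop :=
  ∀ α ≤ γ, Order.IsSuccLimit α → ∀ β < δ, (∀ i < α, (fan β ∩ I i).Infinite) →
    (fan β ∩ ⋂ i ∈ Set.Iio α, I i).Infinite

/-- Sum of the first `i` terms `ω ^ γ` of a Cantor normal form list. -/
noncomputable def partialSum (l : List Ordinal) (i : ℕ) : Ordinal :=
  ((l.take i).map fun γ => Ordinal.omega0 ^ γ).sum

/-- The `i`-th component `C_i` of the Cantor normal form decomposition (for `1 ≤ i`). -/
noncomputable def comp (l : List Ordinal) (i : ℕ) : Set Ordinal :=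
  {β | partialSum l (i - 1) < β ∧ β ≤ partialSum l i}

/-- `subtree α` is `{α} ∪ {β : β ⊏ α}`. -/
def subtree (α : Ordinal) : Set Ordinal := insert α {β | treeOrd β α}

/-- `Tlevel α n` is the set of elements of CB rank `n` in the tree below `α`. -/
def Tlevel (α : Ordinal) (n : ℕ) : Set Ordinal := {β | β ∈ subtree α ∧ CB β = (n : Ordinal)}

/-- `FpowAux k r j = F(ω^k)^r_{k-j}`, defined by downward recursion. -/
noncomputable def FpowAux (k r : ℕ) : ℕ → Set Ordinal
  | 0 => {Ordinal.omega0 ^ (k : Ordinal)}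
  | j + 1 => {γ | treeSucc γ ∈ FpowAux k r j ∧ (r : Ordinal) < placeInFan γ}

/-- `F(ω^k)^r_n` (for `n ≤ k`). -/
noncomputable def Fpow (k r n : ℕ) : Set Ordinal := FpowAux k r (k - n)

/-- `F(α)^r_n`: the copy of `F(ω^k)^r_n` in the tree below `α`, where `k = CB α`. -/
noncomputable def Fgen (α : Ordinal) (r n : ℕ) : Set Ordinal :=
  {β | β ∈ subtree α ∧ ∃ k : ℕ, (k : Ordinal) = CB α ∧ ordIndex (subtree α) β ∈ Fpow k r n}

/-- The collection of `r`-large subsets of `Tlevel α n`. -/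
def LargeR (α : Ordinal) (r n : ℕ) : Set (Set Ordinal) :=
  {A | A ⊆ Tlevel α n ∧ Fgen α r n ⊆ A}

/-- The collection of large subsets of `Tlevel α n`. -/
def Large (α : Ordinal) (n : ℕ) : Set (Set Ordinal) := ⋃ r : ℕ, LargeR α r n

/-- The closed ordinal partition relation `β →_cl (α₀, α₁)²`. -/
def ClRamseyProp (β α₀ α₁ : Ordinal) : Prop :=
  ∀ c : Ordinal → Ordinal → Fin 2,
    ∃ i : Fin 2, ∃ X : Set Ordinal, X ⊆ Set.Iio β ∧
      otp X = (if i = 0 then α₀ else α₁) ∧ ClosedInSup X ∧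
      ∀ x ∈ X, ∀ y ∈ X, x < y → c x y = i


/-! ### Auxiliary lemmas -/

private lemma CB_mod {o : Ordinal} (ho : o ≠ 0)
    (hmod : o % Ordinal.omega0 ^ Ordinal.log Ordinal.omega0 o ≠ 0) :
    CB o = CB (o % Ordinal.omega0 ^ Ordinal.log Ordinal.omega0 o) := by
  obtain ⟨p, l, hpl⟩ : ∃ p l,
      Ordinal.CNF Ordinal.omega0 (o % Ordinal.omega0 ^ Ordinal.log Ordinal.omega0 o) = p :: l :=
    ⟨_, _, Ordinal.CNF.ne_zero hmod⟩
  unfold CB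
  rw [Ordinal.CNF.ne_zero ho, hpl, List.getLast?_cons_cons]

private lemma CB_last {o : Ordinal} (ho : o ≠ 0)
    (hmod : o % Ordinal.omega0 ^ Ordinal.log Ordinal.omega0 o = 0) :
    CB o = Ordinal.log Ordinal.omega0 o := by
  unfold CB
  rw [Ordinal.CNF.ne_zero ho, hmod, Ordinal.CNF.zero_right]
  simp

private lemma log_mul_add {L q t : Ordinal} (hq0 : q ≠ 0) (hqω : q < Ordinal.omega0)
    (ht : t < Ordinal.omega0 ^ L) :
    Ordinal.log Ordinal.omega0 (Ordinal.omega0 ^ L * q + t) = L := by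
  have ho : Ordinal.omega0 ^ L ≤ Ordinal.omega0 ^ L * q + t :=
    le_trans (Ordinal.le_mul_left _ (pos_iff_ne_zero.2 hq0)) (le_self_add)
  have hne : Ordinal.omega0 ^ L * q + t ≠ 0 :=
    fun h => (Ordinal.opow_pos L Ordinal.omega0_pos).ne' (le_antisymm (h ▸ ho) (zero_le (a := Ordinal.omega0 ^ L)))
  have hup : Ordinal.omega0 ^ L * q + t < Ordinal.omega0 ^ (L + 1) := by
    rw [Ordinal.opow_add, Ordinal.opow_one]
    calc Ordinal.omega0 ^ L * q + t < Ordinal.omega0 ^ L * q + Ordinal.omega0 ^ L :=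
          (add_lt_add_iff_left _).2 ht
      _ = Ordinal.omega0 ^ L * (q + 1) := by rw [mul_add_one]
      _ ≤ Ordinal.omega0 ^ L * Ordinal.omega0 := by
          exact mul_le_mul_right (Ordinal.add_one_eq_succ q ▸ Order.succ_le_iff.2 hqω) _
  have h1 : L ≤ Ordinal.log Ordinal.omega0 (Ordinal.omega0 ^ L * q + t) :=
    (Ordinal.opow_le_iff_le_log Ordinal.one_lt_omega0 hne).1 ho
  have h2 : Ordinal.log Ordinal.omega0 (Ordinal.omega0 ^ L * q + t) < L + 1 := by
    rw [← Ordinal.lt_opow_iff_log_lt Ordinal.one_lt_omega0 hne]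
    exact hup
  exact le_antisymm (by rwa [Ordinal.add_one_eq_succ, Order.lt_succ_iff] at h2) h1

private lemma mod_mul_add {L q t : Ordinal} (ht : t < Ordinal.omega0 ^ L) :
    (Ordinal.omega0 ^ L * q + t) % Ordinal.omega0 ^ L = t := by
  rw [Ordinal.mul_add_mod_self, Ordinal.mod_eq_of_lt ht]

private lemma CB_mul {L q : Ordinal} (hq0 : q ≠ 0) (hqω : q < Ordinal.omega0) :
    CB (Ordinal.omega0 ^ L * q) = L := by
  have h0 : (0 : Ordinal) < Ordinal.omega0 ^ L := Ordinal.opow_pos L Ordinal.omega0_pos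
  have hL : Ordinal.log Ordinal.omega0 (Ordinal.omega0 ^ L * q) = L := by
    have := log_mul_add (t := 0) hq0 hqω h0
    simpa using this
  have hmod : (Ordinal.omega0 ^ L * q) % Ordinal.omega0 ^ L = 0 := by
    have := mod_mul_add (q := q) h0
    simp only [add_zero] at this
    exact this
  have hne : Ordinal.omega0 ^ L * q ≠ 0 :=
    _root_.mul_ne_zero h0.ne' hq0
  rw [CB_last hne (by rw [hL]; exact hmod), hL]

private lemma CB_opow (γ : Ordinal) : CB (Ordinal.omega0 ^ γ) = γ := by
  have := CB_mul (L := γ) (q := 1) one_ne_zero Ordinal.one_lt_omega0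
  simpa using this

private lemma CB_add_opow (γ : Ordinal) : ∀ β, CB (β + Ordinal.omega0 ^ γ) = γ := by
  intro β
  induction β using Ordinal.induction with
  | h β IH =>
  rcases lt_or_ge β (Ordinal.omega0 ^ γ) with hβ | hβ
  · rw [Ordinal.add_omega0_opow hβ, CB_opow]
  · have hβ0 : β ≠ 0 :=
      fun h => ((Ordinal.opow_pos γ Ordinal.omega0_pos).trans_le (h ▸ hβ)).false
    set L := Ordinal.log Ordinal.omega0 β with hL
    have hγL : γ ≤ L := (Ordinal.opow_le_iff_le_log Ordinal.one_lt_omega0 hβ0).1 hβ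
    set q := β / Ordinal.omega0 ^ L with hq
    set s := β % Ordinal.omega0 ^ L with hs
    have hdm : Ordinal.omega0 ^ L * q + s = β := Ordinal.div_add_mod β _
    have hop0 : (Ordinal.omega0 : Ordinal) ^ L ≠ 0 :=
      (Ordinal.opow_pos L Ordinal.omega0_pos).ne'
    have hsL : s < Ordinal.omega0 ^ L := Ordinal.mod_lt β hop0
    have hq0 : q ≠ 0 := by
      intro h
      have : β < Ordinal.omega0 ^ L := by
        rw [← hdm, h, mul_zero, zero_add]; exact hsL
      exact absurd (Ordinal.opow_log_le_self Ordinal.omega0 hβ0) this.not_ge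
    have hqω : q < Ordinal.omega0 := Ordinal.div_opow_log_lt β Ordinal.one_lt_omega0
    rcases hγL.lt_or_eq with hLt | hEq
    · -- γ < L : recurse on s
      have htlt : s + Ordinal.omega0 ^ γ < Ordinal.omega0 ^ L :=
        Ordinal.principal_add_omega0_opow L hsL
          ((Ordinal.opow_lt_opow_iff_right Ordinal.one_lt_omega0).2 hLt)
      have hrw : β + Ordinal.omega0 ^ γ
          = Ordinal.omega0 ^ L * q + (s + Ordinal.omega0 ^ γ) := by
        rw [← add_assoc, hdm]
      have hne : β + Ordinal.omega0 ^ γ ≠ 0 := by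
        intro h
        exact ((Ordinal.opow_pos γ Ordinal.omega0_pos).trans_le
          le_add_self).ne' h
      have hlog : Ordinal.log Ordinal.omega0 (β + Ordinal.omega0 ^ γ) = L := by
        rw [hrw]; exact log_mul_add hq0 hqω htlt
      have hmod : (β + Ordinal.omega0 ^ γ) % Ordinal.omega0 ^ L = s + Ordinal.omega0 ^ γ := by
        rw [hrw]; exact mod_mul_add htlt
      have hmodne : s + Ordinal.omega0 ^ γ ≠ 0 := by
        intro h
        exact ((Ordinal.opow_pos γ Ordinal.omega0_pos).trans_le
          le_add_self).ne' h
      have hslt : s < β := hsL.trans_le (Ordinal.opow_log_le_self Ordinal.omega0 hβ0)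
      rw [CB_mod hne (by rw [hlog, hmod]; exact hmodne), hlog, hmod]
      exact IH s hslt
    · -- γ = L
      have habs : β + Ordinal.omega0 ^ γ = Ordinal.omega0 ^ L * (q + 1) := by
        rw [hEq, ← hdm, add_assoc, Ordinal.add_omega0_opow hsL, mul_add_one]
      rw [habs, hEq]
      exact CB_mul (lt_of_lt_of_le zero_lt_one (le_add_self (a := 1) (b := q))).ne'
        (by rw [Ordinal.add_one_eq_succ]; exact Ordinal.isSuccLimit_omega0.succ_lt hqω)

private lemma add_opow_lt {K β γ : Ordinal} (hβ : β < Ordinal.omega0 ^ K) (hγ : γ < K) :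
    β + Ordinal.omega0 ^ γ < Ordinal.omega0 ^ K :=
  Ordinal.principal_add_omega0_opow K hβ
    ((Ordinal.opow_lt_opow_iff_right Ordinal.one_lt_omega0).2 hγ)

private lemma add_opow_eq_opow_iff {β γ K : Ordinal} :
    β + Ordinal.omega0 ^ γ = Ordinal.omega0 ^ K ↔ β < Ordinal.omega0 ^ K ∧ γ = K := by
  constructor
  · intro h
    have hβ : β < Ordinal.omega0 ^ K := by
      rcases (h ▸ le_self_add (a := β) (b := Ordinal.omega0 ^ γ)).lt_or_eq with h' | h'
      · exact h'
      · rw [h'] at h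
        exfalso
        subst h'
        have hlt : Ordinal.omega0 ^ K < Ordinal.omega0 ^ K + Ordinal.omega0 ^ γ :=
          lt_add_of_pos_right _ (Ordinal.opow_pos γ Ordinal.omega0_pos)
        rw [h] at hlt
        exact hlt.false
    have hγK : γ ≤ K :=
      (Ordinal.opow_le_opow_iff_right Ordinal.one_lt_omega0).1
        (h ▸ le_add_self (a := _) (b := β))
    rcases hγK.lt_or_eq with hlt | heq
    · exact absurd h (add_opow_lt hβ hlt).ne
    · exact ⟨hβ, heq⟩
  · rintro ⟨hβ, rfl⟩
    exact Ordinal.add_omega0_opow hβ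

private lemma CB_treeSucc (β : Ordinal) : CB (treeSucc β) = CB β + 1 :=
  CB_add_opow _ _

private def Skey (k r m : ℕ) : Set Ordinal :=
  {β | β < Ordinal.omega0 ^ (k : Ordinal) ∧ CB β = (m : Ordinal) ∧
    (r : Ordinal) < placeInFan β ∧
    ∀ γ : Ordinal, (m : Ordinal) < γ → γ < (k : Ordinal) →
      (r : Ordinal) < placeInFan (β + Ordinal.omega0 ^ γ)}

private lemma key (k r : ℕ) : ∀ j, 1 ≤ j → ∀ m : ℕ, j + m = k →
    FpowAux k r j = Skey k r m := by
  intro j hj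
  induction j, hj using Nat.le_induction with
  | base =>
    intro m hm
    ext β
    simp only [FpowAux, Set.mem_setOf_eq, Set.mem_singleton_iff, Skey, treeSucc]
    constructor
    · rintro ⟨h1, h2⟩
      obtain ⟨hβ, hcb⟩ := add_opow_eq_opow_iff.1 h1
      have hk : (k : Ordinal) = (m : Ordinal) + 1 := by
        have : k = m + 1 := by omega
        exact_mod_cast this
      have hcbm : CB β = (m : Ordinal) := by
        rw [hk] at hcb
        exact (Order.succ_eq_succ_iff (a := CB β) (b := (m : Ordinal))).1
          (by rwa [← Ordinal.add_one_eq_succ, ← Ordinal.add_one_eq_succ])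
      refine ⟨hβ, hcbm, h2, fun γ hγ1 hγ2 => absurd hγ2 ?_⟩
      rw [hk, Ordinal.add_one_eq_succ]
      exact (Order.succ_le_iff.2 hγ1).not_gt
    · rintro ⟨h1, h2, h3, _⟩
      have hk : (k : Ordinal) = (m : Ordinal) + 1 := by
        have : k = m + 1 := by omega
        exact_mod_cast this
      refine ⟨?_, h3⟩
      rw [h2, ← hk]
      exact Ordinal.add_omega0_opow h1
  | succ j hj IH =>
    intro m hm
    have hm' : j + (m + 1) = k := by omega
    have hIH := IH (m + 1) hm'
    have hmk : (m : Ordinal) + 1 < (k : Ordinal) := by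
      have : m + 1 < k := by omega
      exact_mod_cast this
    ext β
    simp only [FpowAux, Set.mem_setOf_eq, hIH, Skey, treeSucc, CB_treeSucc,
      Set.mem_setOf_eq] at *
    constructor
    · rintro ⟨⟨hA, hB, hC, hD⟩, hr⟩
      rw [CB_add_opow] at hB
      have hcbm : CB β = (m : Ordinal) := by
        push_cast at hB
        exact (Order.succ_eq_succ_iff (a := CB β) (b := (m : Ordinal))).1
          (by rwa [← Ordinal.add_one_eq_succ, ← Ordinal.add_one_eq_succ])
      have hβk : β < Ordinal.omega0 ^ (k : Ordinal) :=
        (le_self_add (a := β)).trans_lt hA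
      refine ⟨hβk, hcbm, hr, fun γ hγ1 hγ2 => ?_⟩
      have hγ1' : (m : Ordinal) + 1 ≤ γ := by
        rw [Ordinal.add_one_eq_succ]; exact Order.succ_le_iff.2 hγ1
      rcases hγ1'.lt_or_eq with hlt | heq
      · have habs : β + Ordinal.omega0 ^ (CB β + 1) + Ordinal.omega0 ^ γ
            = β + Ordinal.omega0 ^ γ := by
          rw [add_assoc, Ordinal.add_omega0_opow
            ((Ordinal.opow_lt_opow_iff_right Ordinal.one_lt_omega0).2 (by rw [hcbm]; exact hlt))]
        have := hD γ (by push_cast; exact hlt) hγ2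
        rwa [habs] at this
      · rw [← heq, ← hcbm]
        exact hC
    · rintro ⟨hβk, hcbm, hr, hall⟩
      have hsucc : β + Ordinal.omega0 ^ (CB β + 1) < Ordinal.omega0 ^ (k : Ordinal) :=
        add_opow_lt hβk (by rw [hcbm]; exact hmk)
      have hCB : CB β + 1 = ((m + 1 : ℕ) : Ordinal) := by
        rw [hcbm]; push_cast; rfl
      refine ⟨⟨hsucc, by rw [CB_add_opow]; exact hCB, ?_, fun γ hγ1 hγ2 => ?_⟩, hr⟩
      · rw [hcbm]
        exact hall ((m : Ordinal) + 1) (lt_add_one _) hmk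
      · have hγ1' : (m : Ordinal) + 1 < γ := by push_cast at hγ1; exact hγ1
        have habs : β + Ordinal.omega0 ^ (CB β + 1) + Ordinal.omega0 ^ γ
            = β + Ordinal.omega0 ^ γ := by
          rw [add_assoc, Ordinal.add_omega0_opow
            ((Ordinal.opow_lt_opow_iff_right Ordinal.one_lt_omega0).2
              (by rw [hcbm]; exact hγ1'))]
        rw [habs]
        exact hall γ ((lt_add_one (m : Ordinal)).trans hγ1') hγ2

theorem stmt12 (k n r : ℕ) (hn : n < k) :
    Fpow k r n = {β | treeOrd β (Ordinal.omega0 ^ (k : Ordinal)) ∧ CB β = (n : Ordinal) ∧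
      (r : Ordinal) < placeInFan β ∧
      ∀ β', treeOrd β β' → treeOrd β' (Ordinal.omega0 ^ (k : Ordinal)) →
        (r : Ordinal) < placeInFan β'} := by
  have h1k : 1 ≤ k - n := by omega
  have hkn : (k - n) + n = k := by omega
  have hkey : Fpow k r n = Skey k r n := key k r (k - n) h1k n hkn
  rw [hkey]
  ext β
  simp only [Skey, Set.mem_setOf_eq]
  constructor
  · rintro ⟨hβ, hcb, hr, hall⟩
    have hnk : (n : Ordinal) < (k : Ordinal) := by exact_mod_cast hn
    refine ⟨⟨(k : Ordinal), by rw [hcb]; exact hnk, (Ordinal.add_omega0_opow hβ).symm⟩,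
      hcb, hr, ?_⟩
    rintro β' ⟨γ, hγ1, rfl⟩ ⟨δ, hδ1, hδ2⟩
    obtain ⟨_, rfl⟩ := add_opow_eq_opow_iff.1 hδ2.symm
    rw [CB_add_opow] at hδ1
    exact hall γ (hcb ▸ hγ1) hδ1
  · rintro ⟨⟨γ, hγ1, hγ2⟩, hcb, hr, hall⟩
    obtain ⟨hβ, rfl⟩ := add_opow_eq_opow_iff.1 hγ2.symm
    refine ⟨hβ, hcb, hr, fun δ hδ1 hδ2 => ?_⟩
    refine hall (β + Ordinal.omega0 ^ δ) ⟨δ, hcb ▸ hδ1, rfl⟩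
      ⟨(k : Ordinal), ?_, (Ordinal.add_omega0_opow (add_opow_lt hβ hδ2)).symm⟩
    rw [CB_add_opow]
    exact hδ2
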